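/- Let N ≥ 1 and let x = (x_1,…,x_{2N}) be a tuple of positive real numbers. Define H_0(x) := 0 and, for 1 ≤ k ≤ N, H_k(x) := min over all cyclically sparse subsets S of {1,…,2N} with |S| = k of Σ_{i∈S} x_i. Then the sequence of increments is weakly increasing and positive: for every 1 ≤ k ≤ N, H_k(x) − H_{k−1}(x) > 0, and for every 1 ≤ k ≤ N−1, H_k(x) − H_{k−1}(x) ≤ H_{k+1}(x) − H_k(x). In particular 0 = H_0(x) < H_1(x) < ⋯ < H_N(x). -/

import Mathlib

/-- A subset `S` of `{1, …, 2N}` is *cyclically sparse* if any two distinct elements of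
`S` differ by at least 2 and not both `1` and `2N` lie in `S`. -/
def CycSparse (N : ℕ) (S : Finset ℕ) : Prop :=
  S ⊆ Finset.Icc 1 (2 * N) ∧ (∀ i ∈ S, ∀ j ∈ S, i < j → i + 2 ≤ j) ∧
    ¬(1 ∈ S ∧ 2 * N ∈ S)

/-- `H_0(x) = 0` and, for `k ≥ 1`, `H_k(x)` is the minimum over all cyclically sparse
subsets `S` of `{1,…,2N}` with `|S| = k` of `∑_{i ∈ S} x i`. -/
noncomputable def Hq (N : ℕ) (x : ℕ → ℝ) (k : ℕ) : ℝ :=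
  if k = 0 then 0
  else sInf {s : ℝ | ∃ S : Finset ℕ, CycSparse N S ∧ S.card = k ∧ s = ∑ i ∈ S, x i}

section HqProofAux
open Finset

lemma exchange_list : ∀ (as bs : List ℕ), as.Pairwise (· + 2 ≤ ·) →
    bs.Pairwise (· + 2 ≤ ·) → bs.length = as.length + 2 →
    ∃ j ≤ as.length, (bs.take (j+1) ++ as.drop j).Pairwise (· + 2 ≤ ·) ∧
      (as.take j ++ bs.drop (j+1)).Pairwise (· + 2 ≤ ·) := by
  intro as
  induction as with
  | nil =>
    intro bs _ hb _
    refine ⟨0, le_refl _, ?_, ?_⟩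
    · simpa using hb.sublist (List.take_sublist 1 bs)
    · simpa using hb.sublist (List.drop_sublist 1 bs)
  | cons a as' ih =>
    intro bs ha hb hlen
    match bs with
    | [] => simp at hlen
    | b :: bs' =>
      by_cases hba : b + 2 ≤ a
      · refine ⟨0, Nat.zero_le _, ?_, ?_⟩
        · simp only [List.take_succ_cons, List.take_zero, List.drop_zero,
            List.singleton_append]
          refine List.pairwise_cons.2 ⟨?_, ha⟩
          intro y hy
          rcases List.mem_cons.1 hy with rfl | hy
          · exact hba
          · have := (List.pairwise_cons.1 ha).1 y hy
            omega
        · simpa using hb.sublist (List.drop_sublist 1 (b :: bs'))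
      · have hb2' : bs'.Pairwise (· + 2 ≤ ·) := (List.pairwise_cons.1 hb).2
        have hbmem : ∀ y ∈ bs', b + 2 ≤ y := (List.pairwise_cons.1 hb).1
        have ha' : as'.Pairwise (· + 2 ≤ ·) := (List.pairwise_cons.1 ha).2
        have hamem : ∀ y ∈ as', a + 2 ≤ y := (List.pairwise_cons.1 ha).1
        have hlen' : bs'.length = as'.length + 2 := by simp at hlen; omega
        obtain ⟨b2, bs'', rfl⟩ : ∃ b2 bs'', bs' = b2 :: bs'' := by
          cases bs' with
          | nil => simp at hlen'
          | cons u v => exact ⟨u, v, rfl⟩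
        obtain ⟨j', hj', h1, h2⟩ := ih (b2 :: bs'') ha' hb2' hlen'
        have hb2 : b + 2 ≤ b2 := hbmem b2 List.mem_cons_self
        refine ⟨j' + 1, by simpa using Nat.succ_le_succ hj', ?_, ?_⟩
        · have heq : (b :: b2 :: bs'').take (j' + 1 + 1) ++ (a :: as').drop (j' + 1)
              = b :: ((b2 :: bs'').take (j' + 1) ++ as'.drop j') := by
            simp [List.take_succ_cons, List.drop_succ_cons]
          rw [heq]
          refine List.pairwise_cons.2 ⟨?_, h1⟩
          intro y hy
          rcases List.mem_append.1 hy with hy1 | hy2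
          · exact hbmem y (List.mem_of_mem_take hy1)
          · rw [List.take_succ_cons] at h1
            have := (List.pairwise_cons.1 h1).1 y
              (List.mem_append.2 (Or.inr hy2))
            omega
        · have heq : (a :: as').take (j' + 1) ++ (b :: b2 :: bs'').drop (j' + 1 + 1)
              = a :: (as'.take j' ++ (b2 :: bs'').drop (j' + 1)) := by
            simp [List.take_succ_cons, List.drop_succ_cons]
          rw [heq]
          refine List.pairwise_cons.2 ⟨?_, h2⟩
          intro y hy
          rcases List.mem_append.1 hy with hy1 | hy2
          · exact hamem y (List.mem_of_mem_take hy1)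
          · rw [List.drop_succ_cons] at hy2
            have hyb : b2 + 2 ≤ y := (List.pairwise_cons.1 hb2').1 y
              (List.mem_of_mem_drop hy2)
            omega

lemma pairwise_sort_of_sparse (A : Finset ℕ)
    (hA : ∀ i ∈ A, ∀ j ∈ A, i < j → i + 2 ≤ j) :
    (A.sort (· ≤ ·)).Pairwise (· + 2 ≤ ·) := by
  have h := A.sortedLT_sort.pairwise
  exact h.imp_of_mem (fun {a b} ha hb hab =>
    hA a (by simpa using ha) b (by simpa using hb) hab)

lemma sparse_of_pairwise (l : List ℕ) (hl : l.Pairwise (· + 2 ≤ ·)) :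
    ∀ i ∈ l, ∀ j ∈ l, i < j → i + 2 ≤ j := by
  intro i hi j hj hij
  have hsym : Symmetric (fun a b : ℕ => a + 2 ≤ b ∨ b + 2 ≤ a) := by
    intro a b h; tauto
  haveI : Std.Symm (fun a b : ℕ => a + 2 ≤ b ∨ b + 2 ≤ a) := ⟨fun a b h => hsym h⟩
  have := (hl.imp fun h => Or.inl h).forall (R := fun a b : ℕ => a + 2 ≤ b ∨ b + 2 ≤ a) hi hj (by omega)
  omega

lemma exchange_finset (A B : Finset ℕ)
    (hA : ∀ i ∈ A, ∀ j ∈ A, i < j → i + 2 ≤ j)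
    (hB : ∀ i ∈ B, ∀ j ∈ B, i < j → i + 2 ≤ j)
    (hcard : B.card = A.card + 2) :
    ∃ C D : Finset ℕ,
      (∀ i ∈ C, ∀ j ∈ C, i < j → i + 2 ≤ j) ∧
      (∀ i ∈ D, ∀ j ∈ D, i < j → i + 2 ≤ j) ∧
      C.card = A.card + 1 ∧ D.card = A.card + 1 ∧
      C.val + D.val = A.val + B.val := by
  set as := A.sort (· ≤ ·) with has
  set bs := B.sort (· ≤ ·) with hbs
  have hpa : as.Pairwise (· + 2 ≤ ·) := pairwise_sort_of_sparse A hA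
  have hpb : bs.Pairwise (· + 2 ≤ ·) := pairwise_sort_of_sparse B hB
  have hla : as.length = A.card := Finset.length_sort _
  have hlb : bs.length = B.card := Finset.length_sort _
  obtain ⟨j, hj, h1, h2⟩ := exchange_list as bs hpa hpb (by omega)
  set cs := bs.take (j+1) ++ as.drop j with hcs
  set ds := as.take j ++ bs.drop (j+1) with hds
  have hnc' : cs.Pairwise (· ≠ ·) := h1.imp fun h => by omega
  have hnd' : ds.Pairwise (· ≠ ·) := h2.imp fun h => by omega
  have hnc : cs.Nodup := hnc'
  have hnd : ds.Nodup := hnd'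
  refine ⟨cs.toFinset, ds.toFinset, ?_, ?_, ?_, ?_, ?_⟩
  · intro i hi j hj hij
    exact sparse_of_pairwise cs h1 i (List.mem_toFinset.1 hi) j (List.mem_toFinset.1 hj) hij
  · intro i hi j hj hij
    exact sparse_of_pairwise ds h2 i (List.mem_toFinset.1 hi) j (List.mem_toFinset.1 hj) hij
  · rw [List.toFinset_card_of_nodup hnc, hcs, List.length_append,
      List.length_take, List.length_drop]
    omega
  · rw [List.toFinset_card_of_nodup hnd, hds, List.length_append,
      List.length_take, List.length_drop]
    omega
  · have hc : (cs.toFinset : Finset ℕ).val = (cs : Multiset ℕ) := by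
      rw [List.toFinset_val, List.dedup_eq_self.2 hnc]
    have hd : (ds.toFinset : Finset ℕ).val = (ds : Multiset ℕ) := by
      rw [List.toFinset_val, List.dedup_eq_self.2 hnd]
    have hA' : A.val = (as : Multiset ℕ) := (Finset.sort_eq _ _).symm
    have hB' : B.val = (bs : Multiset ℕ) := (Finset.sort_eq _ _).symm
    have e : ∀ (l : List ℕ) (n : ℕ), (l : Multiset ℕ) = ↑(l.take n) + ↑(l.drop n) := by
      intro l n
      rw [Multiset.coe_add, List.take_append_drop]
    rw [hc, hd, hA', hB', hcs, hds, ← Multiset.coe_add, ← Multiset.coe_add,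
      e as j, e bs (j+1)]
    ac_rfl

def NonAdj (N i j : ℕ) : Prop :=
  (i + 2 ≤ j ∨ j + 2 ≤ i) ∧ ¬(i = 1 ∧ j = 2 * N) ∧ ¬(j = 1 ∧ i = 2 * N)

def rot (N v i : ℕ) : ℕ := if i ≤ v then i + (2 * N - v) else i - v

lemma rot_mem {N v i : ℕ} (hv : v ≤ 2 * N) (hi1 : 1 ≤ i) (hi2 : i ≤ 2 * N) :
    1 ≤ rot N v i ∧ rot N v i ≤ 2 * N := by
  unfold rot; split <;> omega

lemma rot_rot {N v i : ℕ} (hv : v ≤ 2 * N) (hi1 : 1 ≤ i) (hi2 : i ≤ 2 * N) :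
    rot N (2 * N - v) (rot N v i) = i := by
  unfold rot; split <;> split <;> omega

lemma rot_nonadj {N v i j : ℕ} (hN : 1 ≤ N) (hv : v ≤ 2 * N)
    (hi1 : 1 ≤ i) (hi2 : i ≤ 2 * N) (hj1 : 1 ≤ j) (hj2 : j ≤ 2 * N)
    (h : NonAdj N i j) : NonAdj N (rot N v i) (rot N v j) := by
  obtain ⟨h1, h2, h3⟩ := h
  unfold NonAdj rot
  split <;> split <;> omega

lemma cycSparse_iff {N : ℕ} (hN : 1 ≤ N) (S : Finset ℕ) :
    CycSparse N S ↔ S ⊆ Finset.Icc 1 (2 * N) ∧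
      ∀ i ∈ S, ∀ j ∈ S, i ≠ j → NonAdj N i j := by
  constructor
  · rintro ⟨hsub, hgap, hone⟩
    refine ⟨hsub, fun i hi j hj hij => ?_⟩
    have hi' := Finset.mem_Icc.1 (hsub hi)
    have hj' := Finset.mem_Icc.1 (hsub hj)
    rcases Nat.lt_or_ge i j with h | h
    · have := hgap i hi j hj h
      refine ⟨Or.inl this, fun ⟨e1, e2⟩ => hone ⟨e1 ▸ hi, e2 ▸ hj⟩, by omega⟩
    · have hlt : j < i := by omega
      have := hgap j hj i hi hlt
      refine ⟨Or.inr this, by omega, fun ⟨e1, e2⟩ => hone ⟨e1 ▸ hj, e2 ▸ hi⟩⟩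
  · rintro ⟨hsub, h⟩
    refine ⟨hsub, fun i hi j hj hij => ?_, ?_⟩
    · have := h i hi j hj (by omega)
      rcases this.1 with h' | h' <;> omega
    · rintro ⟨h1, h2⟩
      have := h 1 h1 (2 * N) h2 (by omega)
      exact this.2.1 ⟨rfl, rfl⟩

lemma cycSparse_mono {N : ℕ} {S T : Finset ℕ} (h : CycSparse N S) (hsub : T ⊆ S) :
    CycSparse N T :=
  ⟨hsub.trans h.1, fun i hi j hj hij => h.2.1 i (hsub hi) j (hsub hj) hij,
    fun ⟨h1, h2⟩ => h.2.2 ⟨hsub h1, hsub h2⟩⟩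

lemma rot_image_sparse {N v : ℕ} (hN : 1 ≤ N) (hv : v ≤ 2 * N) {S : Finset ℕ}
    (hS : CycSparse N S) : CycSparse N (S.image (rot N v)) := by
  rw [cycSparse_iff hN] at hS ⊢
  obtain ⟨hsub, h⟩ := hS
  constructor
  · intro i hi
    obtain ⟨a, ha, rfl⟩ := Finset.mem_image.1 hi
    have := Finset.mem_Icc.1 (hsub ha)
    have := rot_mem (i := a) hv this.1 this.2
    exact Finset.mem_Icc.2 this
  · intro i hi j hj hij
    obtain ⟨a, ha, rfl⟩ := Finset.mem_image.1 hi
    obtain ⟨b, hb, rfl⟩ := Finset.mem_image.1 hj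
    have ha' := Finset.mem_Icc.1 (hsub ha)
    have hb' := Finset.mem_Icc.1 (hsub hb)
    have hab : a ≠ b := by
      rintro rfl; exact hij rfl
    exact rot_nonadj hN hv ha'.1 ha'.2 hb'.1 hb'.2 (h a ha b hb hab)

lemma rot_injOn {N v : ℕ} (hv : v ≤ 2 * N) {a b : ℕ}
    (ha1 : 1 ≤ a) (ha2 : a ≤ 2 * N) (hb1 : 1 ≤ b) (hb2 : b ≤ 2 * N)
    (h : rot N v a = rot N v b) : a = b := by
  have := rot_rot (v := v) hv ha1 ha2
  have := rot_rot (v := v) hv hb1 hb2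
  rw [← rot_rot (v := v) hv ha1 ha2, ← rot_rot (v := v) hv hb1 hb2, h]


lemma exchange_cyc (N : ℕ) (hN : 1 ≤ N) (A B : Finset ℕ)
    (hA : CycSparse N A) (hB : CycSparse N B)
    (hcard : B.card = A.card + 2) (hk : B.card ≤ N) (x : ℕ → ℝ) :
    ∃ C D : Finset ℕ, CycSparse N C ∧ CycSparse N D ∧
      C.card = A.card + 1 ∧ D.card = A.card + 1 ∧
      ∑ i ∈ C, x i + ∑ i ∈ D, x i = ∑ i ∈ A, x i + ∑ i ∈ B, x i := by
  -- find an unused vertex v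
  have hcardAB : (A ∪ B).card < (Finset.Icc 1 (2 * N)).card := by
    have h1 : (A ∪ B).card ≤ A.card + B.card := Finset.card_union_le A B
    have h2 : (Finset.Icc 1 (2 * N)).card = 2 * N := by
      rw [Nat.card_Icc]; omega
    omega
  obtain ⟨v, hvmem, hvnot⟩ : ∃ v ∈ Finset.Icc 1 (2 * N), v ∉ A ∪ B := by
    by_contra hcon
    push_neg at hcon
    have hsub : Finset.Icc 1 (2 * N) ⊆ A ∪ B := fun w hw => hcon w hw
    exact absurd (Finset.card_le_card hsub) (by omega)
  have hv := Finset.mem_Icc.1 hvmem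
  have hvA : v ∉ A := fun h => hvnot (Finset.mem_union_left _ h)
  have hvB : v ∉ B := fun h => hvnot (Finset.mem_union_right _ h)
  set ρ := rot N v with hρ
  set ρ' := rot N (2 * N - v) with hρ'
  have hρρ' : ∀ i, 1 ≤ i → i ≤ 2 * N → ρ' (ρ i) = i := fun i h1 h2 =>
    rot_rot hv.2 h1 h2
  have hρ'ρ : ∀ j, 1 ≤ j → j ≤ 2 * N → ρ (ρ' j) = j := by
    intro j h1 h2
    have h := rot_rot (v := 2 * N - v) (by omega) h1 h2
    rwa [show 2 * N - (2 * N - v) = v by omega] at h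
  -- images
  set A' := A.image ρ with hA'
  set B' := B.image ρ with hB'
  have hA's : CycSparse N A' := rot_image_sparse hN hv.2 hA
  have hB's : CycSparse N B' := rot_image_sparse hN hv.2 hB
  have hinjA : Set.InjOn ρ A := by
    intro a ha b hb h
    have ha' := Finset.mem_Icc.1 (hA.1 ha)
    have hb' := Finset.mem_Icc.1 (hA.1 hb)
    exact rot_injOn hv.2 ha'.1 ha'.2 hb'.1 hb'.2 h
  have hinjB : Set.InjOn ρ B := by
    intro a ha b hb h
    have ha' := Finset.mem_Icc.1 (hB.1 ha)
    have hb' := Finset.mem_Icc.1 (hB.1 hb)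
    exact rot_injOn hv.2 ha'.1 ha'.2 hb'.1 hb'.2 h
  have hcardA' : A'.card = A.card := Finset.card_image_of_injOn hinjA
  have hcardB' : B'.card = B.card := Finset.card_image_of_injOn hinjB
  -- 2N not in the images
  have h2N : ∀ (S : Finset ℕ), S ⊆ Finset.Icc 1 (2 * N) → v ∉ S →
      2 * N ∉ S.image ρ := by
    intro S hsub hvS h
    obtain ⟨a, ha, hae⟩ := Finset.mem_image.1 h
    have ha' := Finset.mem_Icc.1 (hsub ha)
    have : ρ v = 2 * N := by
      rw [hρ]; unfold rot; simp [hv.1]; omega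
    have : a = v := rot_injOn hv.2 ha'.1 ha'.2 hv.1 hv.2 (hae.trans this.symm)
    exact hvS (this ▸ ha)
  have h2NA : 2 * N ∉ A' := h2N A hA.1 hvA
  have h2NB : 2 * N ∉ B' := h2N B hB.1 hvB
  -- path exchange
  obtain ⟨C', D', hC'g, hD'g, hC'c, hD'c, hmul⟩ :=
    exchange_finset A' B' hA's.2.1 hB's.2.1 (by omega)
  have hCsub : ∀ i ∈ C', i ∈ A' ∨ i ∈ B' := by
    intro i hi
    have : i ∈ C'.val + D'.val := Multiset.mem_add.2 (Or.inl hi)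
    rw [hmul] at this
    exact (Multiset.mem_add.1 this).imp id id
  have hDsub : ∀ i ∈ D', i ∈ A' ∨ i ∈ B' := by
    intro i hi
    have : i ∈ C'.val + D'.val := Multiset.mem_add.2 (Or.inr hi)
    rw [hmul] at this
    exact (Multiset.mem_add.1 this).imp id id
  have hsparse' : ∀ (E : Finset ℕ), (∀ i ∈ E, i ∈ A' ∨ i ∈ B') →
      (∀ i ∈ E, ∀ j ∈ E, i < j → i + 2 ≤ j) → CycSparse N E := by
    intro E hEsub hEg
    refine ⟨?_, hEg, ?_⟩
    · intro i hi
      rcases hEsub i hi with h | h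
      · exact hA's.1 h
      · exact hB's.1 h
    · rintro ⟨_, h2⟩
      rcases hEsub _ h2 with h | h
      · exact h2NA h
      · exact h2NB h
  have hC's : CycSparse N C' := hsparse' C' hCsub hC'g
  have hD's : CycSparse N D' := hsparse' D' hDsub hD'g
  -- map back
  have hinj' : ∀ (E : Finset ℕ), E ⊆ Finset.Icc 1 (2 * N) → Set.InjOn ρ' E := by
    intro E hsub a ha b hb h
    have ha' := Finset.mem_Icc.1 (hsub ha)
    have hb' := Finset.mem_Icc.1 (hsub hb)
    rw [← hρ'ρ a ha'.1 ha'.2, ← hρ'ρ b hb'.1 hb'.2, h]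
  refine ⟨C'.image ρ', D'.image ρ',
    rot_image_sparse hN (by omega) hC's, rot_image_sparse hN (by omega) hD's,
    by rw [Finset.card_image_of_injOn (hinj' C' hC's.1)]; omega,
    by rw [Finset.card_image_of_injOn (hinj' D' hD's.1)]; omega, ?_⟩
  -- sums
  set y : ℕ → ℝ := fun j => x (ρ' j) with hy
  have himg : ∀ (E : Finset ℕ), E ⊆ Finset.Icc 1 (2 * N) →
      ∑ i ∈ E.image ρ', x i = ∑ i ∈ E, y i := fun E hsub =>
    Finset.sum_image (fun a ha b hb h => hinj' E hsub ha hb h)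
  rw [himg C' hC's.1, himg D' hD's.1]
  have hsum : ∀ (E : Finset ℕ), E ⊆ Finset.Icc 1 (2 * N) →
      ∑ i ∈ E.image ρ, y i = ∑ i ∈ E, x i := by
    intro E hsub
    rw [Finset.sum_image]
    · refine Finset.sum_congr rfl fun a ha => ?_
      have ha' := Finset.mem_Icc.1 (hsub ha)
      rw [hy]; simp only []
      rw [hρρ' a ha'.1 ha'.2]
    · intro a ha b hb h
      have ha' := Finset.mem_Icc.1 (hsub ha)
      have hb' := Finset.mem_Icc.1 (hsub hb)
      exact rot_injOn hv.2 ha'.1 ha'.2 hb'.1 hb'.2 h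
  have hAy : ∑ i ∈ A', y i = ∑ i ∈ A, x i := hsum A hA.1
  have hBy : ∑ i ∈ B', y i = ∑ i ∈ B, x i := hsum B hB.1
  rw [← hAy, ← hBy]
  -- use multiset equality
  have : ((C'.val + D'.val).map y).sum = ((A'.val + B'.val).map y).sum := by rw [hmul]
  simpa only [Finset.sum_eq_multiset_sum, Multiset.map_add, Multiset.sum_add] using this

lemma exists_sparse {N k : ℕ} (hk : k ≤ N) :
    ∃ S : Finset ℕ, CycSparse N S ∧ S.card = k := by
  refine ⟨(Finset.range k).image (fun i => 2 * i + 1), ⟨?_, ?_, ?_⟩, ?_⟩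
  · intro i hi
    obtain ⟨a, ha, rfl⟩ := Finset.mem_image.1 hi
    have := Finset.mem_range.1 ha
    exact Finset.mem_Icc.2 (by omega)
  · intro i hi j hj hij
    obtain ⟨a, _, rfl⟩ := Finset.mem_image.1 hi
    obtain ⟨b, _, rfl⟩ := Finset.mem_image.1 hj
    omega
  · rintro ⟨_, h2⟩
    obtain ⟨a, _, ha⟩ := Finset.mem_image.1 h2
    omega
  · rw [Finset.card_image_of_injective _ (fun a b h => by omega)]
    exact Finset.card_range k

end HqProofAux

/-- For positive `x`, the increments `H_k(x) - H_{k-1}(x)` are positive and weakly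
increasing in `k`; in particular `0 = H_0(x) < H_1(x) < ⋯ < H_N(x)`. -/
theorem Hq_increments (N : ℕ) (hN : 1 ≤ N) (x : ℕ → ℝ)
    (hx : ∀ i ∈ Finset.Icc 1 (2 * N), 0 < x i) :
    (∀ k, 1 ≤ k → k ≤ N → 0 < Hq N x k - Hq N x (k - 1)) ∧
      (∀ k, 1 ≤ k → k ≤ N - 1 →
        Hq N x k - Hq N x (k - 1) ≤ Hq N x (k + 1) - Hq N x k) := by
  set T : ℕ → Set ℝ :=
    fun k => {s : ℝ | ∃ S : Finset ℕ, CycSparse N S ∧ S.card = k ∧ s = ∑ i ∈ S, x i}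
    with hT
  have hTne : ∀ k, k ≤ N → (T k).Nonempty := by
    intro k hk
    obtain ⟨S, hS, hSc⟩ := exists_sparse (N := N) hk
    exact ⟨∑ i ∈ S, x i, S, hS, hSc, rfl⟩
  have hTbdd : ∀ k, BddBelow (T k) := by
    intro k
    refine ⟨0, fun s hs => ?_⟩
    obtain ⟨S, hS, _, rfl⟩ := hs
    exact Finset.sum_nonneg fun i hi => (hx i (hS.1 hi)).le
  have hT0 : T 0 = {0} := by
    ext s
    simp only [hT, Set.mem_setOf_eq, Set.mem_singleton_iff]
    constructor
    · rintro ⟨S, _, hc, rfl⟩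
      rw [Finset.card_eq_zero.1 hc, Finset.sum_empty]
    · rintro rfl
      exact ⟨∅, ⟨Finset.empty_subset _, by simp, by simp⟩, Finset.card_empty, by simp⟩
  have hHq : ∀ k, Hq N x k = sInf (T k) := by
    intro k
    rcases Nat.eq_zero_or_pos k with rfl | hk
    · rw [Hq, if_pos rfl, hT0, csInf_singleton]
    · rw [Hq, if_neg (by omega)]
  -- the minimum value of x
  have hIcc : (Finset.Icc 1 (2 * N)).Nonempty := ⟨1, Finset.mem_Icc.2 (by omega)⟩
  set δ : ℝ := (Finset.Icc 1 (2 * N)).inf' hIcc x with hδ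
  have hδpos : 0 < δ := by
    rw [hδ, Finset.lt_inf'_iff]
    exact fun i hi => hx i hi
  have hδle : ∀ i ∈ Finset.Icc 1 (2 * N), δ ≤ x i := fun i hi =>
    Finset.inf'_le x hi
  -- key step inequality
  have hstep : ∀ k, 1 ≤ k → k ≤ N → sInf (T (k - 1)) + δ ≤ sInf (T k) := by
    intro k hk1 hk2
    refine le_csInf (hTne k hk2) fun s hs => ?_
    obtain ⟨S, hS, hSc, rfl⟩ := hs
    obtain ⟨a, ha⟩ := Finset.card_pos.1 (hSc ▸ hk1)
    have hsub : S.erase a ⊆ S := Finset.erase_subset _ _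
    have hmem : (∑ i ∈ S.erase a, x i) ∈ T (k - 1) :=
      ⟨S.erase a, cycSparse_mono hS hsub, by rw [Finset.card_erase_of_mem ha, hSc], rfl⟩
    have h1 : sInf (T (k - 1)) ≤ ∑ i ∈ S.erase a, x i := csInf_le (hTbdd _) hmem
    have h2 : δ ≤ x a := hδle a (hS.1 ha)
    have h3 : ∑ i ∈ S.erase a, x i + x a = ∑ i ∈ S, x i := Finset.sum_erase_add _ _ ha
    linarith
  constructor
  · intro k hk1 hk2
    rw [hHq, hHq]
    have := hstep k hk1 hk2
    linarith
  · intro k hk1 hk2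
    rw [hHq, hHq, hHq]
    have hkey : sInf (T k) + sInf (T k) ≤ sInf (T (k - 1)) + sInf (T (k + 1)) := by
      refine le_of_forall_pos_le_add fun ε hε => ?_
      have hε2 : 0 < ε / 2 := by linarith
      obtain ⟨sa, hsa, hsa'⟩ := Real.lt_sInf_add_pos (hTne (k - 1) (by omega)) hε2
      obtain ⟨sb, hsb, hsb'⟩ := Real.lt_sInf_add_pos (hTne (k + 1) (by omega)) hε2
      obtain ⟨A, hA, hAc, rfl⟩ := hsa
      obtain ⟨B, hB, hBc, rfl⟩ := hsb
      obtain ⟨C, D, hC, hD, hCc, hDc, hsum⟩ :=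
        exchange_cyc N hN A B hA hB (by omega) (by omega) x
      have hCm : (∑ i ∈ C, x i) ∈ T k := ⟨C, hC, by omega, rfl⟩
      have hDm : (∑ i ∈ D, x i) ∈ T k := ⟨D, hD, by omega, rfl⟩
      have h1 : sInf (T k) ≤ ∑ i ∈ C, x i := csInf_le (hTbdd _) hCm
      have h2 : sInf (T k) ≤ ∑ i ∈ D, x i := csInf_le (hTbdd _) hDm
      linarith
    linarith
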